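/- Let F and G be n×n unitary matrices that are both diagonalizable with eigenvalue vectors λ(F) and μ (listed with multiplicity on the unit circle), and suppose F = U₁ D(λ) U₁* and G = U₂ D(μ) U₂*. Then min over permutations σ of |λ - σ(μ)| (Euclidean norm of the vector of differences) is at most the Frobenius norm ‖F - G‖. -/

import Mathlib

open Matrix Finset

lemma frob_eq_trace {n : ℕ} (A : Matrix (Fin n) (Fin n) ℂ) :
    ∑ i, ∑ j, ‖A i j‖ ^ 2 = (Matrix.trace (Aᴴ * A)).re := by
  rw [Matrix.trace, Finset.sum_comm (s := univ) (t := univ) (f := fun i j => ‖A i j‖ ^ 2)]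
  rw [Complex.re_sum]
  refine Finset.sum_congr rfl fun j _ => ?_
  simp only [Matrix.diag_apply, Matrix.mul_apply, Matrix.conjTranspose_apply]
  rw [Complex.re_sum]
  refine Finset.sum_congr rfl fun i _ => ?_
  rw [Complex.star_def, ← Complex.normSq_eq_conj_mul_self]
  simp [Complex.normSq_eq_norm_sq, ← Complex.ofReal_pow]

lemma frob_conj {n : ℕ} (A U V : Matrix (Fin n) (Fin n) ℂ)
    (hU : U ∈ Matrix.unitaryGroup (Fin n) ℂ) (hV : V ∈ Matrix.unitaryGroup (Fin n) ℂ) :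
    ∑ i, ∑ j, ‖(star U * A * V) i j‖ ^ 2 = ∑ i, ∑ j, ‖A i j‖ ^ 2 := by
  rw [frob_eq_trace, frob_eq_trace]
  congr 1
  have h1 : U * Uᴴ = 1 := hU.2
  have h2 : V * Vᴴ = 1 := hV.2
  have key : (star U * A * V)ᴴ * (star U * A * V) = Vᴴ * ((Aᴴ * A) * V) := by
    simp only [Matrix.conjTranspose_mul, Matrix.conjTranspose_conjTranspose,
      Matrix.star_eq_conjTranspose, Matrix.mul_assoc]
    rw [← Matrix.mul_assoc U Uᴴ, h1, Matrix.one_mul]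
  rw [key, Matrix.trace_mul_comm (Vᴴ) ((Aᴴ * A) * V), Matrix.mul_assoc, h2, Matrix.mul_one]

theorem eigenvalue_matching_frobenius_bound (n : ℕ)
    (F G U₁ U₂ : Matrix (Fin n) (Fin n) ℂ) (lam mu : Fin n → ℂ)
    (hF : F ∈ Matrix.unitaryGroup (Fin n) ℂ) (hG : G ∈ Matrix.unitaryGroup (Fin n) ℂ)
    (hU₁ : U₁ ∈ Matrix.unitaryGroup (Fin n) ℂ) (hU₂ : U₂ ∈ Matrix.unitaryGroup (Fin n) ℂ)
    (hlam : ∀ i, ‖lam i‖ = 1) (hmu : ∀ i, ‖mu i‖ = 1)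
    (hFd : F = U₁ * Matrix.diagonal lam * star U₁)
    (hGd : G = U₂ * Matrix.diagonal mu * star U₂) :
    ∃ σ : Equiv.Perm (Fin n),
      Real.sqrt (∑ i, ‖lam i - mu (σ i)‖ ^ 2) ≤
        Real.sqrt (∑ i, ∑ j, ‖(F - G) i j‖ ^ 2) := by
  set W : Matrix (Fin n) (Fin n) ℂ := star U₁ * U₂ with hW
  have hU₁1 : star U₁ * U₁ = 1 := hU₁.1
  have hU₂1 : star U₂ * U₂ = 1 := hU₂.1
  have hconj : star U₁ * (F - G) * U₂ = Matrix.diagonal lam * W - W * Matrix.diagonal mu := by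
    rw [hFd, hGd, Matrix.mul_sub, Matrix.sub_mul]
    congr 1
    · rw [show star U₁ * (U₁ * Matrix.diagonal lam * star U₁) * U₂
          = star U₁ * U₁ * (Matrix.diagonal lam * (star U₁ * U₂)) from by
            simp only [Matrix.mul_assoc], hU₁1, Matrix.one_mul, ← hW]
    · rw [show star U₁ * (U₂ * Matrix.diagonal mu * star U₂) * U₂
          = star U₁ * U₂ * (Matrix.diagonal mu * (star U₂ * U₂)) from by
            simp only [Matrix.mul_assoc], hU₂1, Matrix.mul_one, ← hW]
  have hfrob : ∑ i, ∑ j, ‖(F - G) i j‖ ^ 2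
      = ∑ i, ∑ j, ‖W i j‖ ^ 2 * ‖lam i - mu j‖ ^ 2 := by
    rw [← frob_conj (F - G) U₁ U₂ hU₁ hU₂, hconj]
    refine Finset.sum_congr rfl fun i _ => Finset.sum_congr rfl fun j _ => ?_
    have h : (Matrix.diagonal lam * W - W * Matrix.diagonal mu) i j
        = W i j * (lam i - mu j) := by
      simp only [Matrix.sub_apply, Matrix.diagonal_mul, Matrix.mul_diagonal]
      ring
    rw [h, norm_mul, mul_pow]
  set S : Matrix (Fin n) (Fin n) ℝ := fun i j => ‖W i j‖ ^ 2 with hS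
  have hWU : W ∈ Matrix.unitaryGroup (Fin n) ℂ := mul_mem (Unitary.star_mem hU₁) hU₂
  have hSds : S ∈ doublyStochastic ℝ (Fin n) := by
    rw [mem_doublyStochastic_iff_sum]
    refine ⟨fun i j => by positivity, fun i => ?_, fun j => ?_⟩
    · have h := congrArg (fun M => (M i i).re) hWU.2
      simpa [Matrix.mul_apply, Matrix.one_apply, Complex.re_sum, Matrix.conjTranspose_apply,
        Complex.star_def, Complex.mul_conj, Complex.normSq_eq_norm_sq,
        Matrix.star_eq_conjTranspose, hS, ← Complex.ofReal_pow] using h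
    · have h := congrArg (fun M => (M j j).re) hWU.1
      simpa [Matrix.mul_apply, Matrix.one_apply, Complex.re_sum, Matrix.conjTranspose_apply,
        Complex.star_def, ← Complex.normSq_eq_conj_mul_self, Complex.normSq_eq_norm_sq,
        Matrix.star_eq_conjTranspose, hS, ← Complex.ofReal_pow] using h
  obtain ⟨w, hw0, hw1, hwS⟩ := exists_eq_sum_perm_of_mem_doublyStochastic hSds
  obtain ⟨σ₀, -, hσ₀⟩ := Finset.exists_min_image (Finset.univ : Finset (Equiv.Perm (Fin n)))
    (fun σ => ∑ i, ‖lam i - mu (σ i)‖ ^ 2) ⟨1, Finset.mem_univ 1⟩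
  refine ⟨σ₀, Real.sqrt_le_sqrt ?_⟩
  rw [hfrob]
  have key : ∑ i, ∑ j, S i j * ‖lam i - mu j‖ ^ 2
      = ∑ σ : Equiv.Perm (Fin n), w σ * ∑ i, ‖lam i - mu (σ i)‖ ^ 2 := by
    have hSentry : ∀ i j, S i j = ∑ σ : Equiv.Perm (Fin n), w σ * (σ.permMatrix ℝ) i j := by
      intro i j
      rw [← hwS]
      simp [Matrix.sum_apply]
    calc ∑ i, ∑ j, S i j * ‖lam i - mu j‖ ^ 2
        = ∑ i, ∑ j, ∑ σ : Equiv.Perm (Fin n),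
            w σ * ((σ.permMatrix ℝ) i j * ‖lam i - mu j‖ ^ 2) := by
          refine Finset.sum_congr rfl fun i _ => Finset.sum_congr rfl fun j _ => ?_
          rw [hSentry, Finset.sum_mul]
          simp [mul_assoc]
      _ = ∑ i, ∑ σ : Equiv.Perm (Fin n), ∑ j,
            w σ * ((σ.permMatrix ℝ) i j * ‖lam i - mu j‖ ^ 2) :=
          Finset.sum_congr rfl fun i _ => Finset.sum_comm
      _ = ∑ σ : Equiv.Perm (Fin n), ∑ i, ∑ j,
            w σ * ((σ.permMatrix ℝ) i j * ‖lam i - mu j‖ ^ 2) := Finset.sum_comm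
      _ = ∑ σ : Equiv.Perm (Fin n), w σ * ∑ i, ‖lam i - mu (σ i)‖ ^ 2 := by
          refine Finset.sum_congr rfl fun σ _ => ?_
          rw [Finset.mul_sum]
          refine Finset.sum_congr rfl fun i _ => ?_
          congr 1
          simp [Equiv.Perm.permMatrix, PEquiv.toMatrix_apply, Equiv.toPEquiv_apply,
            ite_mul, Finset.sum_ite_eq, Finset.sum_ite_eq']
  have hle : ∑ i, ‖lam i - mu (σ₀ i)‖ ^ 2
      ≤ ∑ σ : Equiv.Perm (Fin n), w σ * ∑ i, ‖lam i - mu (σ i)‖ ^ 2 := by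
    calc ∑ i, ‖lam i - mu (σ₀ i)‖ ^ 2
        = ∑ σ : Equiv.Perm (Fin n), w σ * ∑ i, ‖lam i - mu (σ₀ i)‖ ^ 2 := by
          rw [← Finset.sum_mul, hw1, one_mul]
      _ ≤ _ := Finset.sum_le_sum fun σ _ =>
          mul_le_mul_of_nonneg_left (hσ₀ σ (Finset.mem_univ σ)) (hw0 σ)
  calc ∑ i, ‖lam i - mu (σ₀ i)‖ ^ 2 ≤ _ := hle
    _ = ∑ i, ∑ j, S i j * ‖lam i - mu j‖ ^ 2 := key.symm
    _ = ∑ i, ∑ j, ‖W i j‖ ^ 2 * ‖lam i - mu j‖ ^ 2 := rfl
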